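/- Let (X,d) be a metric space, T : X → X satisfying P(Tx,Ty,Tz) < P(x,y,z) for all pairwise distinct x,y,z, and suppose T has no point of prime period 2. If the Picard orbit xₙ = Tⁿx₀ satisfies xₙ ≠ Txₙ for all n, then the sequence Pₙ := P(xₙ, xₙ₊₁, xₙ₊₂) is strictly decreasing, and consequently all terms xₙ of the orbit are pairwise distinct. -/
import Mathlib

theorem stmt_11 {X : Type*} [MetricSpace X] (T : X → X)
    (h : ∀ x y z : X, x ≠ y → y ≠ z → x ≠ z →
      dist (T x) (T y) + dist (T y) (T z) + dist (T x) (T z) <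
        dist x y + dist y z + dist x z)
    (hper : ∀ x : X, T (T x) = x → T x = x)
    (x : ℕ → X) (hx : ∀ n, x (n + 1) = T (x n))
    (hnf : ∀ n, x n ≠ T (x n)) :
    StrictAnti (fun n => dist (x n) (x (n+1)) + dist (x (n+1)) (x (n+2)) +
      dist (x n) (x (n+2))) ∧
    ∀ m n : ℕ, m ≠ n → x m ≠ x n := by
  have hd : ∀ n, x n ≠ x (n+1) := fun n => by rw [hx n]; exact hnf n
  have hd2 : ∀ n, x n ≠ x (n+2) := by
    intro n he
    have h2 : T (T (x n)) = x n := by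
      rw [← hx, ← hx]; exact he.symm
    exact hnf n (hper _ h2).symm
  have hSA : StrictAnti (fun n => dist (x n) (x (n+1)) + dist (x (n+1)) (x (n+2)) +
      dist (x n) (x (n+2))) := by
    apply strictAnti_nat_of_succ_lt
    intro n
    have := h (x n) (x (n+1)) (x (n+2)) (hd n) (hd (n+1)) (hd2 n)
    simp only [← hx] at this
    simpa [show n+1+1 = n+2 from rfl, show n+1+2 = n+3 from rfl,
      show n+2+1 = n+3 from rfl] using this
  refine ⟨hSA, ?_⟩
  have key : ∀ m n : ℕ, m < n → x m ≠ x n := by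
    intro m n hmn he
    have hk : ∀ k, x (m+k) = x (n+k) := by
      intro k
      induction k with
      | zero => simpa using he
      | succ k ih => rw [show m+(k+1) = (m+k)+1 from rfl, show n+(k+1) = (n+k)+1 from rfl,
          hx, hx, ih]
    have hEq : (fun n => dist (x n) (x (n+1)) + dist (x (n+1)) (x (n+2)) +
        dist (x n) (x (n+2))) m = (fun n => dist (x n) (x (n+1)) + dist (x (n+1)) (x (n+2)) +
        dist (x n) (x (n+2))) n := by
      simp only
      rw [show m+1 = m+1 from rfl]
      have h0 := hk 0
      have h1 := hk 1
      have h2 := hk 2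
      simp only [Nat.add_zero] at h0
      rw [h0, h1, h2]
    exact absurd hEq (ne_of_gt (hSA hmn))
  intro m n hmn
  rcases lt_or_gt_of_ne hmn with hlt | hgt
  · exact key m n hlt
  · exact fun he => key n m hgt he.symm
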